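/- If A <_X B ⊃ C (i.e. B ⊃ C is obtained from A by a nonempty sequence of substitutions of X-free formulas for variables distinct from X), then there exist sub-formulas A₁ and A₂ of A such that A₁ ≤_X B and A₂ ≤_X C. -/
import Mathlib


namespace RPT

/-- Formulas of second-order propositional logic (variables, ⊃, ∀). -/
inductive Frm : Type where
  | var : ℕ → Frm
  | imp : Frm → Frm → Frm
  | all : ℕ → Frm → Frm
deriving DecidableEq

namespace Frm

/-- `A.occursFree X` : the variable `X` occurs free in `A`. -/
def occursFree : Frm → ℕ → Bool
  | .var Y, X => Y == X
  | .imp A B, X => A.occursFree X || B.occursFree X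
  | .all Y A, X => Y != X && A.occursFree X

/-- `A.subst C X` : the substitution `A[C/X]`. -/
def subst : Frm → Frm → ℕ → Frm
  | .var Y, C, X => if Y = X then C else .var Y
  | .imp A B, C, X => .imp (A.subst C X) (B.subst C X)
  | .all Y A, C, X => if Y = X then .all Y A else .all Y (A.subst C X)

end Frm

/-- `SpX X C` : `C` is strictly positive relative to `X`. -/
inductive SpX (X : ℕ) : Frm → Prop where
  | var (Z : ℕ) : SpX X (.var Z)
  | imp {A B : Frm} : A.occursFree X = false → SpX X B → SpX X (.imp A B)
  | all {Y : ℕ} {A : Frm} : Y ≠ X → SpX X A → SpX X (.all Y A)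

/-- `Subf A B` : `A` is a sub-formula of `B`. -/
inductive Subf : Frm → Frm → Prop where
  | refl (A : Frm) : Subf A A
  | impL {A B C : Frm} : Subf A B → Subf A (.imp B C)
  | impR {A B C : Frm} : Subf A C → Subf A (.imp B C)
  | all {A B : Frm} {Y : ℕ} : Subf A B → Subf A (.all Y B)

/-- One substitution step: `A <'_X B` iff `B ≡ A[C/Y]` for some `Y ≢ X` and
some formula `C` in which `X` does not occur free. -/
def stepX (X : ℕ) (A B : Frm) : Prop :=
  ∃ (Y : ℕ) (C : Frm), Y ≠ X ∧ C.occursFree X = false ∧ B = A.subst C Y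

/-- Substituting an X-free formula preserves X-freeness. -/
lemma occ_subst {X : ℕ} (A : Frm) {C : Frm} {Y : ℕ}
    (hC : C.occursFree X = false) (hA : A.occursFree X = false) :
    (A.subst C Y).occursFree X = false := by
  induction A with
  | var Z =>
      simp only [Frm.subst]
      split
      · exact hC
      · exact hA
  | imp A₁ A₂ ih₁ ih₂ =>
      simp only [Frm.occursFree, Bool.or_eq_false_iff] at hA
      simp [Frm.subst, Frm.occursFree, ih₁ hA.1, ih₂ hA.2]
  | all Z A' ih =>
      simp only [Frm.subst]
      split
      · simpa [Frm.occursFree] using hA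
      · simp only [Frm.occursFree, Bool.and_eq_false_iff] at hA ⊢
        rcases hA with h | h
        · exact Or.inl h
        · exact Or.inr (ih h)

lemma step_pres {X : ℕ} {A A' : Frm} (h : stepX X A A')
    (hA : A.occursFree X = false) : A'.occursFree X = false := by
  obtain ⟨Y, C, _, hC, rfl⟩ := h
  exact occ_subst A hC hA

/-- If every variable sub-formula of `A` is `X`, then any substitution for a
variable `Y ≠ X` fixes `A`. -/
lemma subst_fix {X : ℕ} (A : Frm) (hA : ∀ Z, Subf (.var Z) A → Z = X)
    {C : Frm} {Y : ℕ} (hY : Y ≠ X) : A.subst C Y = A := by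
  induction A with
  | var Z =>
      have hZ : Z = X := hA Z (Subf.refl _)
      subst hZ
      rw [Frm.subst, if_neg (fun h => hY h.symm)]
  | imp A₁ A₂ ih₁ ih₂ =>
      rw [Frm.subst, ih₁ (fun Z h => hA Z (Subf.impL h)),
        ih₂ (fun Z h => hA Z (Subf.impR h))]
  | all Z A' ih =>
      rw [Frm.subst]
      split
      · rfl
      · rw [ih (fun W h => hA W (Subf.all h))]

lemma chain_fix {X : ℕ} {A D : Frm} (hA : ∀ Z, Subf (.var Z) A → Z = X)
    (h : Relation.ReflTransGen (stepX X) A D) : D = A := by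
  induction h with
  | refl => rfl
  | tail h₁ h₂ ih =>
      obtain ⟨Y, C, hY, _, rfl⟩ := h₂
      rw [ih, subst_fix A hA hY]

/-- Key chain lemma: if `A` reaches an implication, then either `A` is itself
an implication whose components reach the corresponding components, or both
components of the final implication are X-free. -/
lemma chain_imp {X : ℕ} {A D : Frm}
    (h : Relation.ReflTransGen (stepX X) A D) :
    ∀ D₁ D₂ : Frm, D = .imp D₁ D₂ →
      (∃ A₁ A₂ : Frm, A = .imp A₁ A₂ ∧
        Relation.ReflTransGen (stepX X) A₁ D₁ ∧
        Relation.ReflTransGen (stepX X) A₂ D₂) ∨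
      (D₁.occursFree X = false ∧ D₂.occursFree X = false) := by
  induction h with
  | refl =>
      intro D₁ D₂ hD
      exact Or.inl ⟨D₁, D₂, hD, Relation.ReflTransGen.refl,
        Relation.ReflTransGen.refl⟩
  | @tail D' D h₁ h₂ ih =>
      intro D₁ D₂ hD
      subst hD
      obtain ⟨Y, C, hY, hC, heq⟩ := h₂
      match D', heq with
      | .var Z, heq =>
          rw [Frm.subst] at heq
          split at heq
          · subst heq
            simp only [Frm.occursFree, Bool.or_eq_false_iff] at hC
            exact Or.inr hC
          · exact absurd heq (by simp)
      | .imp E₁ E₂, heq =>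
          rw [Frm.subst] at heq
          obtain ⟨h₁', h₂'⟩ := Frm.imp.inj heq
          rcases ih E₁ E₂ rfl with ⟨A₁, A₂, rfl, c₁, c₂⟩ | ⟨f₁, f₂⟩
          · exact Or.inl ⟨A₁, A₂, rfl,
              c₁.tail ⟨Y, C, hY, hC, h₁'⟩, c₂.tail ⟨Y, C, hY, hC, h₂'⟩⟩
          · exact Or.inr ⟨h₁' ▸ occ_subst E₁ hC f₁, h₂' ▸ occ_subst E₂ hC f₂⟩
      | .all Z E, heq =>
          rw [Frm.subst] at heq
          split at heq <;> exact absurd heq (by simp)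

/-- if `A <_X B ⊃ C`, then there are sub-formulas `A₁, A₂` of `A`
with `A₁ ≤_X B` and `A₂ ≤_X C`. -/
theorem ltX_implication (X : ℕ) (A B C : Frm)
    (h : Relation.TransGen (stepX X) A (.imp B C)) :
    ∃ A₁ A₂ : Frm, Subf A₁ A ∧ Subf A₂ A ∧
      Relation.ReflTransGen (stepX X) A₁ B ∧
      Relation.ReflTransGen (stepX X) A₂ C := by
  have h' := h.to_reflTransGen
  rcases chain_imp h' B C rfl with ⟨A₁, A₂, rfl, c₁, c₂⟩ | ⟨f₁, f₂⟩
  · exact ⟨A₁, A₂, Subf.impL (Subf.refl _), Subf.impR (Subf.refl _), c₁, c₂⟩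
  · by_cases hA : ∀ Z, Subf (.var Z) A → Z = X
    · have := chain_fix hA h'
      subst this
      exact ⟨B, C, Subf.impL (Subf.refl _), Subf.impR (Subf.refl _),
        Relation.ReflTransGen.refl, Relation.ReflTransGen.refl⟩
    · push_neg at hA
      obtain ⟨Z, hZ, hZX⟩ := hA
      refine ⟨.var Z, .var Z, hZ, hZ, ?_, ?_⟩
      · exact Relation.ReflTransGen.single ⟨Z, B, hZX, f₁, by simp [Frm.subst]⟩
      · exact Relation.ReflTransGen.single ⟨Z, C, hZX, f₂, by simp [Frm.subst]⟩

end RPT
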